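/- Let 𝒜 be an incomplete pairwise comparison matrix on n alternatives with connected graph G = (V,E), and define κ(y) = (1/2) Σ_{i=1}^n Σ_{j ∈ N_i} (ln 𝒜_ij − y_i + y_j)² for y ∈ ℝⁿ. Then y* ∈ ℝⁿ is a global minimizer of κ over ℝⁿ if and only if Σ_{j ∈ N_i} (ln 𝒜_ij − y*_i + y*_j) = 0 for every i = 1,…,n; equivalently, if and only if L y* = P 1ₙ, where L is the graph Laplacian of G, P is the n×n matrix with P_ij = ln 𝒜_ij if {i,j} ∈ E and P_ij = 0 otherwise, and 1ₙ is the all-ones vector. -/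

import Mathlib

noncomputable section

/-- The incomplete logarithmic least squares objective
`κ(y) = ½ Σ_i Σ_{j ∈ N_i} (ln 𝒜_ij − y_i + y_j)²`. -/
def kappaLLS {n : ℕ} (G : SimpleGraph (Fin n)) [DecidableRel G.Adj]
    (A : Fin n → Fin n → ℝ) (y : Fin n → ℝ) : ℝ :=
  (1 / 2) * ∑ i : Fin n, ∑ j : Fin n,
    if G.Adj i j then (Real.log (A i j) - y i + y j) ^ 2 else 0

/-- The graph Laplacian of `G`. -/
def lap {n : ℕ} (G : SimpleGraph (Fin n)) [DecidableRel G.Adj] :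
    Matrix (Fin n) (Fin n) ℝ :=
  Matrix.of fun i j =>
    if i = j then ((Finset.univ.filter fun k => G.Adj i k).card : ℝ)
    else if G.Adj i j then -1 else 0

/-- The matrix `P` with `P_ij = ln 𝒜_ij` on edges and `0` elsewhere. -/
def Pmat {n : ℕ} (G : SimpleGraph (Fin n)) [DecidableRel G.Adj]
    (A : Fin n → Fin n → ℝ) : Matrix (Fin n) (Fin n) ℝ :=
  Matrix.of fun i j => if G.Adj i j then Real.log (A i j) else 0

namespace KappaAux

variable {n : ℕ} (G : SimpleGraph (Fin n)) [DecidableRel G.Adj] (A : Fin n → Fin n → ℝ)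

lemma key_expansion
    (hanti : ∀ i j, G.Adj i j → Real.log (A j i) = - Real.log (A i j))
    (ystar y : Fin n → ℝ) :
    kappaLLS G A y = kappaLLS G A ystar
      - 2 * ∑ i, (y i - ystar i) *
          (∑ j, if G.Adj i j then Real.log (A i j) - ystar i + ystar j else 0)
      + (1/2) * ∑ i, ∑ j,
          (if G.Adj i j then ((y j - ystar j) - (y i - ystar i))^2 else 0) := by
  classical
  have hsum : (∑ i, ∑ j, if G.Adj i j then (Real.log (A i j) - y i + y j) ^ 2 else 0)
      = (∑ i, ∑ j, if G.Adj i j then (Real.log (A i j) - ystar i + ystar j) ^ 2 else 0)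
        + (∑ i, ∑ j, if G.Adj i j then
            2 * (Real.log (A i j) - ystar i + ystar j) * ((y j - ystar j) - (y i - ystar i)) else 0)
        + (∑ i, ∑ j, if G.Adj i j then ((y j - ystar j) - (y i - ystar i)) ^ 2 else 0) := by
    rw [← Finset.sum_add_distrib, ← Finset.sum_add_distrib]
    refine Finset.sum_congr rfl fun i _ => ?_
    rw [← Finset.sum_add_distrib, ← Finset.sum_add_distrib]
    refine Finset.sum_congr rfl fun j _ => ?_
    by_cases h : G.Adj i j <;> simp [h] <;> ring
  have hT1 : (∑ i, ∑ j, if G.Adj i j then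
        2 * (Real.log (A i j) - ystar i + ystar j) * (y j - ystar j) else 0)
      = - ∑ i, ∑ j, if G.Adj i j then
          2 * (Real.log (A i j) - ystar i + ystar j) * (y i - ystar i) else 0 := by
    rw [Finset.sum_comm, ← Finset.sum_neg_distrib]
    refine Finset.sum_congr rfl fun i _ => ?_
    rw [← Finset.sum_neg_distrib]
    refine Finset.sum_congr rfl fun j _ => ?_
    by_cases h : G.Adj i j
    · have h' : G.Adj j i := h.symm
      simp only [h, h', if_true]
      rw [hanti j i h']
      ring
    · have h' : ¬ G.Adj j i := fun hc => h hc.symm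
      simp [h, h']
  have e2 : ∀ i : Fin n, (∑ j, if G.Adj i j then
        2 * (Real.log (A i j) - ystar i + ystar j) * (y i - ystar i) else 0)
      = 2 * ((y i - ystar i) * ∑ j, if G.Adj i j then Real.log (A i j) - ystar i + ystar j else 0) := by
    intro i
    rw [Finset.mul_sum, Finset.mul_sum]
    refine Finset.sum_congr rfl fun j _ => ?_
    by_cases h : G.Adj i j <;> simp [h] <;> ring
  have hcross : (∑ i, ∑ j, if G.Adj i j then
        2 * (Real.log (A i j) - ystar i + ystar j) * ((y j - ystar j) - (y i - ystar i)) else 0)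
      = -4 * ∑ i, (y i - ystar i) *
          (∑ j, if G.Adj i j then Real.log (A i j) - ystar i + ystar j else 0) := by
    have e1 : (∑ i, ∑ j, if G.Adj i j then
          2 * (Real.log (A i j) - ystar i + ystar j) * ((y j - ystar j) - (y i - ystar i)) else 0)
        = (∑ i, ∑ j, if G.Adj i j then
            2 * (Real.log (A i j) - ystar i + ystar j) * (y j - ystar j) else 0)
          - (∑ i, ∑ j, if G.Adj i j then
              2 * (Real.log (A i j) - ystar i + ystar j) * (y i - ystar i) else 0) := by
      rw [← Finset.sum_sub_distrib]
      refine Finset.sum_congr rfl fun i _ => ?_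
      rw [← Finset.sum_sub_distrib]
      refine Finset.sum_congr rfl fun j _ => ?_
      by_cases h : G.Adj i j <;> simp [h] <;> ring
    rw [e1, hT1, Finset.sum_congr rfl fun i _ => e2 i, ← Finset.mul_sum]
    ring
  unfold kappaLLS
  rw [hsum, hcross]
  ring

end KappaAux

/-- **First-order characterization of the ILLS minimizers.**
For an incomplete pairwise comparison matrix `𝒜` with connected graph `G`,
`y*` is a global minimizer of `κ` over `ℝⁿ` iff
`Σ_{j ∈ N_i} (ln 𝒜_ij − y*_i + y*_j) = 0` for every `i`, equivalently iff
`L y* = P 1ₙ`. -/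
theorem kappa_global_min_iff
    {n : ℕ} (G : SimpleGraph (Fin n)) [DecidableRel G.Adj] (hconn : G.Connected)
    (A : Fin n → Fin n → ℝ)
    (hpos : ∀ i j, G.Adj i j → 0 < A i j)
    (hrec : ∀ i j, G.Adj i j → A j i = 1 / A i j)
    (hzero : ∀ i j, ¬ G.Adj i j → A i j = 0)
    (ystar : Fin n → ℝ) :
    ((∀ y : Fin n → ℝ, kappaLLS G A ystar ≤ kappaLLS G A y) ↔
      ∀ i : Fin n,
        (∑ j : Fin n, if G.Adj i j then Real.log (A i j) - ystar i + ystar j else 0)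
          = 0) ∧
    ((∀ y : Fin n → ℝ, kappaLLS G A ystar ≤ kappaLLS G A y) ↔
      (lap G).mulVec ystar = (Pmat G A).mulVec (fun _ => 1)) := by
  classical
  have hanti : ∀ i j, G.Adj i j → Real.log (A j i) = - Real.log (A i j) := by
    intro i j h
    rw [hrec i j h, one_div, Real.log_inv]
  set S : Fin n → ℝ :=
    fun i => ∑ j, if G.Adj i j then Real.log (A i j) - ystar i + ystar j else 0 with hS
  have key := KappaAux.key_expansion G A hanti ystar
  -- First iff
  have h1 : (∀ y : Fin n → ℝ, kappaLLS G A ystar ≤ kappaLLS G A y) ↔ ∀ i, S i = 0 := by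
    constructor
    · intro hmin i0
      by_contra hne
      have hn : 0 < n := Fin.pos i0
      have hn2 : (0:ℝ) < (n:ℝ)^2 := by positivity
      set t : ℝ := S i0 / (n:ℝ)^2 with ht
      set y : Fin n → ℝ := fun k => ystar k + if k = i0 then t else 0 with hy
      have hdy : ∀ k, y k - ystar k = if k = i0 then t else 0 := by
        intro k; simp [hy]
      have hlin : (∑ i, (y i - ystar i) * S i) = t * S i0 := by
        have : ∀ i, (y i - ystar i) * S i = if i = i0 then t * S i else 0 := by
          intro i; rw [hdy i]; by_cases h : i = i0 <;> simp [h]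
        rw [Finset.sum_congr rfl fun i _ => this i]
        simp
      have hquad : (∑ i, ∑ j, if G.Adj i j then ((y j - ystar j) - (y i - ystar i))^2 else 0)
          ≤ (n:ℝ)^2 * t^2 := by
        have hterm : ∀ i j : Fin n,
            (if G.Adj i j then ((y j - ystar j) - (y i - ystar i))^2 else 0) ≤ t^2 := by
          intro i j
          rw [hdy i, hdy j]
          split_ifs <;> nlinarith [sq_nonneg t]
        calc (∑ i, ∑ j, if G.Adj i j then ((y j - ystar j) - (y i - ystar i))^2 else 0)
            ≤ ∑ i : Fin n, ∑ j : Fin n, t^2 := by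
              refine Finset.sum_le_sum fun i _ => Finset.sum_le_sum fun j _ => hterm i j
          _ = (n:ℝ)^2 * t^2 := by
              simp [Finset.sum_const, Finset.card_univ]
              ring
      have hmin' := hmin y
      rw [key y, hlin] at hmin'
      -- 0 ≤ -2 t S + (1/2) Q ≤ -2 t S + (1/2) n² t²
      have h0 : 2 * (t * S i0) ≤ (1/2) * ((n:ℝ)^2 * t^2) := by nlinarith
      have hS2 : 0 < (S i0)^2 := by positivity
      have hc : ((n:ℝ)^2) ≠ 0 := ne_of_gt hn2
      rw [ht] at h0
      field_simp at h0
      have hd : (0:ℝ) < 2 * ((n:ℝ)^2)^2 := by positivity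
      nlinarith [mul_pos hS2 (mul_pos hn2 hn2), mul_pos hS2 hn2]
    · intro hSz y
      rw [key y]
      have hq : 0 ≤ (∑ i, ∑ j, if G.Adj i j then ((y j - ystar j) - (y i - ystar i))^2 else 0) := by
        refine Finset.sum_nonneg fun i _ => Finset.sum_nonneg fun j _ => ?_
        split_ifs <;> positivity
      have hlz : (∑ i, (y i - ystar i) * S i) = 0 := by
        refine Finset.sum_eq_zero fun i _ => ?_
        rw [hSz i]; ring
      rw [hlz]
      nlinarith
  -- S i as matrix quantity
  have hSm : ∀ i, S i = (Pmat G A).mulVec (fun _ => 1) i - (lap G).mulVec ystar i := by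
    intro i
    have hdeg : ((Finset.univ.filter fun k => G.Adj i k).card : ℝ) * ystar i
        = ∑ j, if G.Adj i j then ystar i else 0 := by
      rw [← Finset.sum_filter, Finset.sum_const, nsmul_eq_mul]
    have hlap : (lap G).mulVec ystar i
        = ((Finset.univ.filter fun k => G.Adj i k).card : ℝ) * ystar i
          - ∑ j, if G.Adj i j then ystar j else 0 := by
      unfold lap Matrix.mulVec dotProduct
      simp only [Matrix.of_apply]
      have : ∀ j : Fin n,
          (if i = j then ((Finset.univ.filter fun k => G.Adj i k).card : ℝ)
            else if G.Adj i j then -1 else 0) * ystar j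
          = (if i = j then ((Finset.univ.filter fun k => G.Adj i k).card : ℝ) * ystar j else 0)
            + (if G.Adj i j then -ystar j else 0) := by
        intro j
        by_cases h : i = j
        · subst h; simp [G.irrefl]
        · by_cases h2 : G.Adj i j <;> simp [h, h2]
      rw [Finset.sum_congr rfl fun j _ => this j, Finset.sum_add_distrib]
      rw [Finset.sum_ite_eq Finset.univ i (fun j => ((Finset.univ.filter fun k => G.Adj i k).card : ℝ) * ystar j)]
      simp only [Finset.mem_univ, if_true]
      have hneg : (∑ j, if G.Adj i j then -ystar j else 0)
          = - ∑ j, if G.Adj i j then ystar j else 0 := by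
        rw [← Finset.sum_neg_distrib]
        refine Finset.sum_congr rfl fun j _ => ?_
        split_ifs <;> simp
      rw [hneg]
      ring
    have hP : (Pmat G A).mulVec (fun _ => 1) i = ∑ j, if G.Adj i j then Real.log (A i j) else 0 := by
      unfold Pmat Matrix.mulVec dotProduct
      simp
    have hSsplit : S i = (∑ j, if G.Adj i j then Real.log (A i j) else 0)
        - (∑ j, if G.Adj i j then ystar i else 0)
        + (∑ j, if G.Adj i j then ystar j else 0) := by
      rw [hS]
      simp only []
      rw [← Finset.sum_sub_distrib, ← Finset.sum_add_distrib]
      refine Finset.sum_congr rfl fun j _ => ?_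
      split_ifs <;> ring
    rw [hSsplit, hlap, hP, hdeg]
    ring
  have h2 : (∀ i, S i = 0) ↔ (lap G).mulVec ystar = (Pmat G A).mulVec (fun _ => 1) := by
    constructor
    · intro h
      funext i
      have := hSm i
      rw [h i] at this
      linarith [this]
    · intro h i
      rw [hSm i, h]
      ring
  exact ⟨h1, h1.trans h2⟩
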